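/- Let ρ, λ, ν > 0 with λ > νρ, let δ > 0, and let r < 0 < s be the two real roots of ρξ² + (λ+δ-νρ)ξ - νδ = 0. Define b(δ) = (1/(r-s)) · log( (s/r) · (ρs+δ)/(ρr+δ) ), assuming ρr + δ < 0. Then b(δ) → ∞ as δ → 0⁺. -/

import Mathlib

open Filter Topology

theorem stmt_8 (ρ lam ν : ℝ) (hρ : 0 < ρ) (hlam : 0 < lam) (hν : 0 < ν)
    (h : ν * ρ < lam)
    (r s b : ℝ → ℝ)
    (hr : ∀ δ : ℝ, r δ =
      (-(lam + δ - ν * ρ) - Real.sqrt ((lam + δ - ν * ρ)^2 + 4 * ρ * ν * δ)) / (2 * ρ))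
    (hs : ∀ δ : ℝ, s δ =
      (-(lam + δ - ν * ρ) + Real.sqrt ((lam + δ - ν * ρ)^2 + 4 * ρ * ν * δ)) / (2 * ρ))
    (hb : ∀ δ : ℝ, b δ =
      (1 / (r δ - s δ)) * Real.log ((s δ / r δ) * ((ρ * s δ + δ) / (ρ * r δ + δ)))) :
    Tendsto b (𝓝[>] 0) atTop := by
  have hc : (0:ℝ) < lam - ν * ρ := sub_pos.mpr h
  set c := lam - ν * ρ with hcdef
  -- limit of the square root
  have hsq : Tendsto (fun δ : ℝ => Real.sqrt ((lam + δ - ν * ρ)^2 + 4 * ρ * ν * δ))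
      (𝓝 0) (𝓝 c) := by
    have hcont : Continuous (fun δ : ℝ => Real.sqrt ((lam + δ - ν * ρ)^2 + 4 * ρ * ν * δ)) := by
      fun_prop
    have := hcont.tendsto 0
    simpa [Real.sqrt_sq (show (0:ℝ) ≤ lam - ν * ρ from hc.le)] using this
  have hX : Tendsto (fun δ : ℝ => lam + δ - ν * ρ) (𝓝 0) (𝓝 c) := by
    have : Continuous (fun δ : ℝ => lam + δ - ν * ρ) := by fun_prop
    simpa using this.tendsto 0
  have hre : r = fun δ =>
      (-(lam + δ - ν * ρ) - Real.sqrt ((lam + δ - ν * ρ)^2 + 4 * ρ * ν * δ)) / (2 * ρ) :=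
    funext hr
  have hse : s = fun δ =>
      (-(lam + δ - ν * ρ) + Real.sqrt ((lam + δ - ν * ρ)^2 + 4 * ρ * ν * δ)) / (2 * ρ) :=
    funext hs
  have hrlim : Tendsto r (𝓝 0) (𝓝 (-(c / ρ))) := by
    rw [hre]
    have : Tendsto (fun δ : ℝ =>
        (-(lam + δ - ν * ρ) - Real.sqrt ((lam + δ - ν * ρ)^2 + 4 * ρ * ν * δ)) / (2 * ρ))
        (𝓝 0) (𝓝 ((-c - c) / (2 * ρ))) := (hX.neg.sub hsq).div_const _
    have heq : (-c - c) / (2 * ρ) = -(c / ρ) := by field_simp; ring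
    rwa [heq] at this
  have hslim : Tendsto s (𝓝 0) (𝓝 0) := by
    rw [hse]
    have : Tendsto (fun δ : ℝ =>
        (-(lam + δ - ν * ρ) + Real.sqrt ((lam + δ - ν * ρ)^2 + 4 * ρ * ν * δ)) / (2 * ρ))
        (𝓝 0) (𝓝 ((-c + c) / (2 * ρ))) := (hX.neg.add hsq).div_const _
    simpa using this
  have hcρ : -(c / ρ) < 0 := neg_neg_iff_pos.mpr (div_pos hc hρ)
  -- limit of ρ * r δ + δ
  have hprd : Tendsto (fun δ : ℝ => ρ * r δ + δ) (𝓝 0) (𝓝 (-c)) := by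
    have h1 := (hrlim.const_mul ρ).add (tendsto_id : Tendsto (fun δ : ℝ => δ) (𝓝 0) (𝓝 0))
    have heq : ρ * -(c / ρ) + 0 = -c := by field_simp; ring
    rw [heq] at h1
    exact h1
  -- sign facts for δ > 0
  have hsr : ∀ δ : ℝ, 0 < δ → 0 < s δ ∧ r δ < 0 := by
    intro δ hδ
    have hX2 : (0:ℝ) ≤ (lam + δ - ν * ρ)^2 := sq_nonneg _
    have hlt : |lam + δ - ν * ρ| < Real.sqrt ((lam + δ - ν * ρ)^2 + 4 * ρ * ν * δ) := by
      rw [← Real.sqrt_sq_eq_abs]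
      apply Real.sqrt_lt_sqrt hX2
      have : 0 < 4 * ρ * ν * δ := by positivity
      linarith
    have h1 : 0 < -(lam + δ - ν * ρ) + Real.sqrt ((lam + δ - ν * ρ)^2 + 4 * ρ * ν * δ) := by
      have := le_abs_self (lam + δ - ν * ρ)
      linarith
    have h2 : -(lam + δ - ν * ρ) - Real.sqrt ((lam + δ - ν * ρ)^2 + 4 * ρ * ν * δ) < 0 := by
      have := neg_abs_le (lam + δ - ν * ρ)
      linarith
    constructor
    · rw [hs δ]; positivity
    · rw [hr δ]; exact div_neg_of_neg_of_pos h2 (by positivity)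
  -- eventually ρ * r δ + δ < 0 on 𝓝[>] 0
  have hev : ∀ᶠ δ in 𝓝[>] (0:ℝ), ρ * r δ + δ < 0 := by
    have hm : Tendsto (fun δ : ℝ => ρ * r δ + δ) (𝓝[>] (0:ℝ)) (𝓝 (-c)) :=
      hprd.mono_left nhdsWithin_le_nhds
    exact hm.eventually_lt_const (show -c < (0:ℝ) by linarith)
  -- A tends to 0 within positives
  have hAlim : Tendsto (fun δ : ℝ => (s δ / r δ) * ((ρ * s δ + δ) / (ρ * r δ + δ)))
      (𝓝 0) (𝓝 0) := by
    have h1 : Tendsto (fun δ : ℝ => s δ / r δ) (𝓝 0) (𝓝 (0 / -(c / ρ))) :=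
      hslim.div hrlim (ne_of_lt hcρ)
    have h2 : Tendsto (fun δ : ℝ => (ρ * s δ + δ) / (ρ * r δ + δ)) (𝓝 0)
        (𝓝 ((ρ * 0 + 0) / -c)) := by
      exact (((hslim.const_mul ρ).add (tendsto_id : Tendsto (fun δ : ℝ => δ) (𝓝 0) (𝓝 0))).div hprd (by linarith))
    have := h1.mul h2
    simpa using this
  have hApos : ∀ᶠ δ in 𝓝[>] (0:ℝ),
      0 < (s δ / r δ) * ((ρ * s δ + δ) / (ρ * r δ + δ)) := by
    filter_upwards [hev, self_mem_nhdsWithin] with δ h1 h2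
    have hδ : 0 < δ := h2
    obtain ⟨hs0, hr0⟩ := hsr δ hδ
    have ha : s δ / r δ < 0 := div_neg_of_pos_of_neg hs0 hr0
    have hb' : (ρ * s δ + δ) / (ρ * r δ + δ) < 0 :=
      div_neg_of_pos_of_neg (by positivity) h1
    exact mul_pos_of_neg_of_neg ha hb'
  have hA : Tendsto (fun δ : ℝ => (s δ / r δ) * ((ρ * s δ + δ) / (ρ * r δ + δ)))
      (𝓝[>] 0) (𝓝[>] 0) :=
    tendsto_nhdsWithin_of_tendsto_nhds_of_eventually_within _
      (hAlim.mono_left nhdsWithin_le_nhds) hApos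
  have hlog : Tendsto (fun δ : ℝ => Real.log ((s δ / r δ) * ((ρ * s δ + δ) / (ρ * r δ + δ))))
      (𝓝[>] 0) atBot :=
    Real.tendsto_log_nhdsGT_zero.comp hA
  have hdiff : Tendsto (fun δ : ℝ => 1 / (r δ - s δ)) (𝓝 0) (𝓝 (1 / (-(c / ρ)))) := by
    have hd : Tendsto (fun δ : ℝ => r δ - s δ) (𝓝 0) (𝓝 (-(c / ρ) - 0)) := hrlim.sub hslim
    rw [sub_zero] at hd
    simpa [one_div] using hd.inv₀ (ne_of_lt hcρ)
  have hneg : 1 / (-(c / ρ)) < 0 := one_div_neg.mpr hcρ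
  have hmain : Tendsto (fun δ : ℝ =>
      (1 / (r δ - s δ)) * Real.log ((s δ / r δ) * ((ρ * s δ + δ) / (ρ * r δ + δ))))
      (𝓝[>] 0) atTop :=
    (hdiff.mono_left nhdsWithin_le_nhds).neg_mul_atBot hneg hlog
  have hbe : b = fun δ =>
      (1 / (r δ - s δ)) * Real.log ((s δ / r δ) * ((ρ * s δ + δ) / (ρ * r δ + δ))) :=
    funext hb
  rw [hbe]
  exact hmain
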